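/- With Y(z) := ∑_{k≥1} B^r_k·B_{2(k−1)}(r)·z^k, the identity ∑_{k≥1} B_{2(k−1)}(r)·z^k = z·ψ_μ(Y(z)) holds as formal power series, where ψ_μ(Y) = 1 + ∑_{k≥1} μ_{k+1}·Y(z)^k is the formal composition. -/

import Mathlib

open scoped Classical

/-- Rooted plane trees: a tree is a root together with the ordered list of
the subtrees hanging from its children (left-to-right order). -/
inductive PTree where
  | node : List PTree → PTree

namespace PTree

instance : Inhabited PTree := ⟨.node []⟩

/-- number of nodes -/
def size : PTree → ℕ
  | node l => 1 + (l.attach.map (fun c => size c.1)).sum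
decreasing_by
  have := List.sizeOf_lt_of_mem c.2
  simp only [node.sizeOf_spec]; omega

/-- tree factorial: `t! = |t| * ∏ᵢ tᵢ!` -/
def tfact : PTree → ℕ
  | node l => size (node l) * (l.attach.map (fun c => tfact c.1)).prod
decreasing_by
  have := List.sizeOf_lt_of_mem c.2
  simp only [node.sizeOf_spec]; omega

/-- Shape equivalence: two plane trees have the same underlying rooted tree,
i.e. there is a bijection between children matching shape-equivalent subtrees. -/
inductive ShapeEq : PTree → PTree → Prop
  | node {l₁ l₂ : List PTree} (e : Fin l₁.length ≃ Fin l₂.length)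
      (h : ∀ i, ShapeEq (l₁.get i) (l₂.get (e i))) :
      ShapeEq (node l₁) (node l₂)

lemma size_pos (t : PTree) : 0 < t.size := by
  cases t; simp [size]

/-- The plane tree encoded by a parent function `p : Fin n → Fin n`:
`shapeAux n p fuel i` is the subtree rooted at node `i`, whose children are the
`j` with `p j = i` and `i < j` (ordered by label). `fuel = n` suffices. -/
def shapeAux (n : ℕ) (p : Fin n → Fin n) : ℕ → Fin n → PTree
  | 0, _ => node []
  | fuel+1, i =>
      node (((List.finRange n).filter (fun j => decide (p j = i ∧ i < j))).map
        (shapeAux n p fuel))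

/-- The plane tree encoded by a parent function (rooted at node `0`). -/
def shapeOf {n : ℕ} (p : Fin n → Fin n) : PTree :=
  if h : 0 < n then shapeAux n p n ⟨0, h⟩ else node []

/-- `alpha t` is the number of rooted labelled (increasing) trees of shape `t`:
labelled trees are encoded by their parent function, the root carrying the
label `0` and labels increasing away from the root. -/
noncomputable def alpha (t : PTree) : ℕ :=
  Nat.card {p : Fin t.size → Fin t.size //
    p ⟨0, t.size_pos⟩ = ⟨0, t.size_pos⟩ ∧
    (∀ j : Fin t.size, 0 < (j : ℕ) → (p j : ℕ) < j) ∧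
    ShapeEq (shapeOf p) t}

/-- `kappa t` is the number of rooted plane trees of shape `t`. -/
noncomputable def kappa (t : PTree) : ℕ := Nat.card {t' : PTree // ShapeEq t' t}

/-- symmetry factor: `σ(B₊(t₁^{n₁},…,t_m^{n_m})) = ∏ᵢ nᵢ! σ(tᵢ)^{nᵢ}`. -/
noncomputable def sym : PTree → ℕ
  | node l =>
      (∏ j : Fin l.length,
        (l.take ((j : ℕ) + 1)).countP (fun c => decide (ShapeEq c (l.get j)))) *
      (l.attach.map (fun c => sym c.1)).prod
decreasing_by
  have := List.sizeOf_lt_of_mem c.2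
  simp only [node.sizeOf_spec]; omega

/-- elementary differentials: `δ_• = 1`, `δ_t = k! ψ_k ∏ᵢ δ_{tᵢ}`. -/
def delta (ψ : ℕ → ℝ) : PTree → ℝ
  | node l =>
      (Nat.factorial l.length : ℝ) * ψ l.length *
      (l.attach.map (fun c => delta ψ c.1)).prod
decreasing_by
  have := List.sizeOf_lt_of_mem c.2
  simp only [node.sizeOf_spec]; omega

/-- bare Green function with weights `B`: `B(t) = B_{|t|} ∏ᵢ B(tᵢ)`. -/
def bare (B : ℕ → ℝ) : PTree → ℝ
  | node l => B (size (node l)) * (l.attach.map (fun c => bare B c.1)).prod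
decreasing_by
  have := List.sizeOf_lt_of_mem c.2
  simp only [node.sizeOf_spec]; omega

/-- `wt ψ t = ∏_{v ∈ t} ψ (d v)` where `d v` is the outdegree of `v`. -/
def wt (ψ : ℕ → ℝ) : PTree → ℝ
  | node l => ψ l.length * (l.attach.map (fun c => wt ψ c.1)).prod
decreasing_by
  have := List.sizeOf_lt_of_mem c.2
  simp only [node.sizeOf_spec]; omega

/-- `nodeProd B t = ∏_{w ≠ root} B_{|t_w|}`, product over non-root nodes of `t`. -/
def nodeProd (B : ℕ → ℝ) : PTree → ℝ
  | node l => (l.attach.map (fun c => B (size c.1) * nodeProd B c.1)).prod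
decreasing_by
  have := List.sizeOf_lt_of_mem c.2
  simp only [node.sizeOf_spec]; omega

/-- `R` is a set of representatives of the rooted trees with `n` nodes:
every plane tree of size `n` is shape-equivalent to exactly one member of `R`. -/
def IsTransversal (n : ℕ) (R : Finset PTree) : Prop :=
  (∀ t ∈ R, size t = n) ∧
  ∀ t : PTree, size t = n → ∃! u, u ∈ R ∧ ShapeEq t u

end PTree

namespace PTree

lemma attach_map_eq {α : Type*} (l : List PTree) (f : PTree → α) :
    l.attach.map (fun c => f c.1) = l.map f := by simp

lemma size_node (l : List PTree) : size (node l) = 1 + (l.map size).sum := by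
  rw [size, attach_map_eq]

lemma wt_node (ψ : ℕ → ℝ) (l : List PTree) :
    wt ψ (node l) = ψ l.length * (l.map (wt ψ)).prod := by
  rw [wt, attach_map_eq]

lemma nodeProd_node (B : ℕ → ℝ) (l : List PTree) :
    nodeProd B (node l) = (l.map (fun c => B (size c) * nodeProd B c)).prod := by
  rw [nodeProd]
  exact congrArg List.prod (by simp)

lemma prod_map_mul' (l : List PTree) (f g : PTree → ℝ) :
    (l.map fun x => f x * g x).prod = (l.map f).prod * (l.map g).prod := by
  induction l with
  | nil => simp
  | cons a l ih => simp only [List.map_cons, List.prod_cons, ih]; ring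

lemma size_eq_one {t : PTree} : size t = 1 ↔ t = node [] := by
  constructor
  · intro h
    obtain ⟨l⟩ := t
    cases l with
    | nil => rfl
    | cons a l =>
      exfalso
      have := size_pos a
      simp only [size_node, List.map_cons, List.sum_cons] at h
      omega
  · rintro rfl; simp [size_node]

/-- out-degree of the root -/
def rdeg : PTree → ℕ | node l => l.length

/-- product of `G` over the children of the root -/
def chP (G : PTree → ℝ) : PTree → ℝ | node l => (l.map G).prod

/-- first child of the root (junk if none) -/
def hd : PTree → PTree
  | node [] => node []
  | node (c :: _) => c

/-- remove the first child of the root -/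
def tl : PTree → PTree
  | node [] => node []
  | node (_ :: l) => node l

/-- graft a new first child onto the root -/
def consT (c : PTree) : PTree → PTree | node l => node (c :: l)

lemma size_consT (c u : PTree) : size (consT c u) = size c + size u := by
  obtain ⟨l⟩ := u
  simp only [consT, size_node, List.map_cons, List.sum_cons]
  omega

lemma rdeg_consT (c u : PTree) : rdeg (consT c u) = rdeg u + 1 := by
  obtain ⟨l⟩ := u
  simp [consT, rdeg]

lemma chP_consT (G : PTree → ℝ) (c u : PTree) :
    chP G (consT c u) = G c * chP G u := by
  obtain ⟨l⟩ := u
  simp [consT, chP]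

lemma hd_consT (c u : PTree) : hd (consT c u) = c := by
  obtain ⟨l⟩ := u; rfl

lemma tl_consT (c u : PTree) : tl (consT c u) = u := by
  obtain ⟨l⟩ := u; rfl

lemma consT_hd_tl {t : PTree} (h : 0 < rdeg t) : consT (hd t) (tl t) = t := by
  obtain ⟨l⟩ := t
  cases l with
  | nil => simp [rdeg] at h
  | cons a l => rfl

lemma length_le_sum_sizes (l : List PTree) : l.length ≤ (l.map size).sum := by
  induction l with
  | nil => simp
  | cons a l ih =>
    have := size_pos a
    simp only [List.map_cons, List.sum_cons, List.length_cons]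
    omega

end PTree

open PTree in
/-- With `Y(z) = ∑_{k≥1} B^r_k·B_{2(k−1)}(r)·zᵏ`, the identity
`∑_{k≥1} B_{2(k−1)}(r)·zᵏ = z·ψ_μ(Y(z))` holds as formal power series,
where `ψ_μ(z) = 1 + ∑_{k≥1} μ_{k+1} zᵏ` and `c n = [zⁿ](ψ_μ∘Y)` (the
composition is well defined since `Y` has zero constant term). -/
theorem trace_series_fixed_point
    (β : ℝ) (hβ : 0 < β) (r : ℕ → ℝ) (μm : ℕ → ℝ) (hμ1 : μm 1 = 1)
    (Br : ℕ → ℝ) (hBrdef : ∀ k : ℕ, 1 ≤ k → Br k = β ^ 2 * r (2 * k - 1))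
    (F : ℕ → Finset PTree) (hF : ∀ n (t : PTree), t ∈ F n ↔ size t = n)
    (B2 : ℕ → ℝ) (hB20 : B2 0 = 1)
    (hB2 : ∀ k : ℕ, 1 ≤ k → B2 k =
      ∑ t ∈ F (k + 1), nodeProd Br t * wt (fun d => μm (d + 1)) t)
    (Y : PowerSeries ℝ)
    (hY : Y = PowerSeries.mk (fun k => if k = 0 then 0 else Br k * B2 (k - 1)))
    (c : ℕ → ℝ)
    (hc : ∀ n, c n = ∑ j ∈ Finset.range (n + 1),
      (if j = 0 then 1 else μm (j + 1)) * PowerSeries.coeff n (Y ^ j)) :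
    PowerSeries.mk (fun k => if k = 0 then 0 else B2 (k - 1)) =
      PowerSeries.X * PowerSeries.mk c := by
  classical
  set ψ : ℕ → ℝ := fun d => μm (d + 1) with hψ
  set G : PTree → ℝ := fun t => Br (size t) * (nodeProd Br t * wt ψ t) with hG
  have hF1 : F 1 = {node []} := by
    ext t; simp [hF, size_eq_one]
  have hF0 : F 0 = ∅ := by
    ext t
    simp only [hF, Finset.notMem_empty, iff_false]
    have := size_pos t; omega
  have hsum : ∀ n, ∑ t ∈ F (n + 1), nodeProd Br t * wt ψ t = B2 n := by
    intro n
    cases n with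
    | zero =>
      rw [hF1, Finset.sum_singleton, hB20]
      rw [show (node [] : PTree) = node (List.map id []) from rfl]
      rw [nodeProd_node, wt_node]
      simp [hψ, hμ1]
    | succ m => exact (hB2 (m + 1) (by omega)).symm
  have hYcoeff : ∀ n, PowerSeries.coeff n Y = ∑ t ∈ F n, G t := by
    intro n
    rw [hY, PowerSeries.coeff_mk]
    cases n with
    | zero => simp [hF0]
    | succ m =>
      simp only [Nat.succ_ne_zero, if_false, Nat.add_sub_cancel]
      rw [← hsum m, Finset.mul_sum]
      refine Finset.sum_congr rfl (fun t ht => ?_)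
      have hst : size t = m + 1 := (hF _ t).mp ht
      simp [hG, hst]
  have hA : ∀ t : PTree, nodeProd Br t * wt ψ t = ψ (rdeg t) * chP G t := by
    intro t
    obtain ⟨l⟩ := t
    have h3 : ∀ l' : List PTree,
        (l'.map (fun u => Br (size u) * (nodeProd Br u * wt ψ u))).prod
        = (l'.map (fun u => Br (size u) * nodeProd Br u)).prod * (l'.map (wt ψ)).prod := by
      intro l'
      induction l' with
      | nil => simp
      | cons a l' ih => simp only [List.map_cons, List.prod_cons, ih]; ring
    rw [nodeProd_node, wt_node, rdeg, chP, hG, h3 l]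
    ring
  have hH : ∀ (j n : ℕ), PowerSeries.coeff n (Y ^ j)
      = ∑ t ∈ (F (n + 1)).filter (fun t => rdeg t = j), chP G t := by
    intro j
    induction j with
    | zero =>
      intro n
      rw [pow_zero, PowerSeries.coeff_one]
      cases n with
      | zero =>
        have he : (F 1).filter (fun t => rdeg t = 0) = {node []} := by
          rw [hF1]
          ext t
          simp only [Finset.mem_filter, Finset.mem_singleton]
          constructor
          · rintro ⟨h, _⟩; exact h
          · rintro rfl; exact ⟨rfl, rfl⟩
        rw [he]
        simp [chP]
      | succ m =>
        have he : (F (m + 2)).filter (fun t => rdeg t = 0) = ∅ := by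
          ext t
          simp only [Finset.mem_filter, hF, Finset.notMem_empty, iff_false, not_and]
          intro hs hr
          obtain ⟨l⟩ := t
          cases l with
          | nil =>
            simp only [size_node, List.map_nil, List.sum_nil] at hs
            omega
          | cons a l => simp [rdeg] at hr
        simp [he]
    | succ j ih =>
      intro n
      rw [pow_succ', PowerSeries.coeff_mul]
      have step1 : ∀ p ∈ Finset.HasAntidiagonal.antidiagonal n,
          PowerSeries.coeff p.1 Y * PowerSeries.coeff p.2 (Y ^ j)
          = ∑ cc ∈ F p.1, ∑ u ∈ (F (p.2 + 1)).filter (fun t => rdeg t = j),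
              G cc * chP G u := by
        intro p _
        rw [hYcoeff, ih, Finset.sum_mul_sum]
      rw [Finset.sum_congr rfl step1]
      rw [Finset.sum_sigma' (Finset.HasAntidiagonal.antidiagonal n)
        (fun p => F p.1)
        (fun p cc => ∑ u ∈ (F (p.2 + 1)).filter (fun t => rdeg t = j), G cc * chP G u)]
      rw [Finset.sum_sigma' ((Finset.HasAntidiagonal.antidiagonal n).sigma (fun p => F p.1))
        (fun x => (F (x.1.2 + 1)).filter (fun t => rdeg t = j))
        (fun x u => G x.2 * chP G u)]
      refine Finset.sum_bij' (fun x _ => consT x.1.2 x.2)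
        (fun t _ => ⟨⟨(size (hd t), n - size (hd t)), hd t⟩, tl t⟩) ?_ ?_ ?_ ?_ ?_
      · rintro ⟨⟨p, cc⟩, u⟩ hx
        simp only [Finset.mem_sigma, Finset.HasAntidiagonal.mem_antidiagonal, Finset.mem_filter, hF] at hx
        obtain ⟨⟨hp, hcc⟩, hu, hru⟩ := hx
        refine Finset.mem_filter.mpr ⟨(hF _ _).mpr ?_, ?_⟩
        · rw [size_consT, hcc, hu]; omega
        · rw [rdeg_consT, hru]
      · intro t ht
        simp only [Finset.mem_filter, hF] at ht
        obtain ⟨hts, htr⟩ := ht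
        have h0 : 0 < rdeg t := by omega
        obtain ⟨l⟩ := t
        cases l with
        | nil => simp [rdeg] at h0
        | cons a l =>
          have hhd : hd (node (a :: l)) = a := rfl
          have htl : tl (node (a :: l)) = node l := rfl
          have hs : size (node (a :: l)) = size a + size (node l) := by
            simp only [size_node, List.map_cons, List.sum_cons]; omega
          have h1 := size_pos a
          have h2 := size_pos (node l)
          have hr : rdeg (node (a :: l)) = rdeg (node l) + 1 := by simp [rdeg]
          rw [hs] at hts
          rw [hhd, htl]
          rw [hr] at htr
          refine Finset.mem_sigma.mpr ⟨Finset.mem_sigma.mpr ⟨?_, ?_⟩, ?_⟩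
          · exact Finset.HasAntidiagonal.mem_antidiagonal.mpr (show size a + (n - size a) = n by omega)
          · exact (hF _ _).mpr rfl
          · refine Finset.mem_filter.mpr ⟨(hF _ _).mpr ?_, ?_⟩
            · show size (node l) = (n - size a) + 1
              omega
            · show rdeg (node l) = j
              omega
      · rintro ⟨⟨p, cc⟩, u⟩ hx
        simp only [Finset.mem_sigma, Finset.HasAntidiagonal.mem_antidiagonal, Finset.mem_filter, hF] at hx
        obtain ⟨⟨hp, hcc⟩, hu, hru⟩ := hx
        simp only [hd_consT, tl_consT]
        have hp1 : p.1 = size cc := hcc.symm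
        have hp2 : p.2 = n - size cc := by omega
        have hpp : p = (size cc, n - size cc) := by
          rw [Prod.ext_iff]; exact ⟨hp1, hp2⟩
        subst hpp
        rfl
      · intro t ht
        simp only [Finset.mem_filter, hF] at ht
        exact consT_hd_tl (by omega)
      · rintro ⟨⟨p, cc⟩, u⟩ _
        rw [chP_consT]
  have hBc : ∀ n, B2 n = c n := by
    intro n
    rw [hc n]
    have hmaps : ∀ t ∈ F (n + 1), rdeg t ∈ Finset.range (n + 1) := by
      intro t ht
      have hts : size t = n + 1 := (hF _ t).mp ht
      obtain ⟨l⟩ := t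
      have := length_le_sum_sizes l
      simp only [size_node] at hts
      simp only [rdeg, Finset.mem_range]
      omega
    calc B2 n = ∑ t ∈ F (n + 1), ψ (rdeg t) * chP G t := by
          rw [← hsum n]
          exact Finset.sum_congr rfl (fun t _ => hA t)
      _ = ∑ jj ∈ Finset.range (n + 1),
            ∑ t ∈ (F (n + 1)).filter (fun t => rdeg t = jj), ψ (rdeg t) * chP G t :=
          (Finset.sum_fiberwise_of_maps_to hmaps _).symm
      _ = ∑ jj ∈ Finset.range (n + 1),
            (if jj = 0 then (1 : ℝ) else μm (jj + 1)) * PowerSeries.coeff n (Y ^ jj) := by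
          refine Finset.sum_congr rfl (fun jj _ => ?_)
          rw [hH jj n, Finset.mul_sum]
          refine Finset.sum_congr rfl (fun t ht => ?_)
          have hrt : rdeg t = jj := (Finset.mem_filter.mp ht).2
          rw [hrt]
          rcases jj with _ | jj
          · simp [hψ, hμ1]
          · simp [hψ]
  refine PowerSeries.ext (fun n => ?_)
  cases n with
  | zero =>
    simp [PowerSeries.coeff_zero_eq_constantCoeff, map_mul]
  | succ m =>
    rw [PowerSeries.coeff_succ_X_mul, PowerSeries.coeff_mk, PowerSeries.coeff_mk]
    simp [hBc m]
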